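/- Let k, ℓ > 0, let π1 ∈ T_k and π2 ∈ T_ℓ, and let i be an integer with 1 ≤ i ≤ slmax(π2). Then slmax(C2(π1, π2, i)) = slmax(π1) + slmax(π2) − i + 1. -/

import Mathlib

namespace TSP

theorem foldr_max_mem {α : Type} [LinearOrder α] (x : α) (l : List α) :
    l.foldr max x ∈ x :: l := by
  induction l with
  | nil => simp
  | cons a t ih =>
    simp only [List.foldr_cons]
    rcases max_choice a (t.foldr max x) with h | h <;> rw [h]
    · simp
    · rcases List.mem_cons.mp ih with h' | h'
      · rw [h']; simp
      · exact List.mem_cons.mpr (Or.inr (List.mem_cons.mpr (Or.inr h')))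

theorem length_takeWhile_lt {α : Type} [DecidableEq α] {m : α} {l : List α}
    (h : m ∈ l) : (l.takeWhile (· ≠ m)).length < l.length := by
  have hd : l.dropWhile (· ≠ m) ≠ [] := by
    intro hnil
    have := List.dropWhile_eq_nil_iff.mp hnil m h
    simp at this
  have hsum : (l.takeWhile (· ≠ m)).length + (l.dropWhile (· ≠ m)).length = l.length := by
    rw [← List.length_append, List.takeWhile_append_dropWhile]
  have : 0 < (l.dropWhile (· ≠ m)).length := List.length_pos_iff.mpr hd
  omega

theorem length_tail_dropWhile_lt {α : Type} [DecidableEq α] {m : α} {l : List α}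
    (h : l ≠ []) : ((l.dropWhile (· ≠ m)).tail).length < l.length := by
  have hsum : (l.takeWhile (· ≠ m)).length + (l.dropWhile (· ≠ m)).length = l.length := by
    rw [← List.length_append, List.takeWhile_append_dropWhile]
  have h2 : ((l.dropWhile (· ≠ m)).tail).length = (l.dropWhile (· ≠ m)).length - 1 :=
    List.length_tail
  have : 0 < l.length := List.length_pos_iff.mpr h
  omega

/-- The stack-sorting operator `S`: `S(ε) = ε`, and if `A` is nonempty with
largest element `m` and `A = A_L · (m) · A_R`, then `S(A) = S(A_L) · S(A_R) · (m)`. -/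
def S {α : Type} [LinearOrder α] : List α → List α
  | [] => []
  | x :: l =>
    let m := l.foldr max x
    S ((x :: l).takeWhile (· ≠ m)) ++ S (((x :: l).dropWhile (· ≠ m)).tail) ++ [m]
termination_by l => l.length
decreasing_by
  · have hm := foldr_max_mem x l
    rw [← List.foldr_attach] at hm
    exact length_takeWhile_lt hm
  · exact length_tail_dropWhile_lt (by simp)

/-- The identity permutation `id_n = (1, 2, …, n)` as a list. -/
def idPerm (n : ℕ) : List ℕ := List.range' 1 n

/-- `l` is a permutation of `{1, …, n}` (viewed as a sequence). -/
def IsPermOf (n : ℕ) (l : List ℕ) : Prop := l.Perm (idPerm n)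

/-- `l` is a two-stack sortable permutation (of `{1, …, len l}`). -/
def Is2SS (l : List ℕ) : Prop := IsPermOf l.length l ∧ S (S l) = idPerm l.length

/-- `σ^{+k}`: add `k` to every entry. -/
def shift (k : ℕ) (l : List ℕ) : List ℕ := l.map (· + k)

/-- `σ^{+(k1,m,k2)}`: add `k1` to every entry strictly smaller than `m`, `k2` to the others. -/
def shift3 (k1 m k2 : ℕ) (l : List ℕ) : List ℕ :=
  l.map (fun a => if a < m then a + k1 else a + k2)

/-- Standardization `P(A)`: the permutation of `{1,…,len A}` in the same relative order. -/
def stand (l : List ℕ) : List ℕ := l.map (fun a => (l.filter (fun b => b ≤ a)).length)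

/-- Avoidance of the pattern 231: no positions `i < j < k` with `l(k) < l(i) < l(j)`. -/
def Avoids231 (l : List ℕ) : Prop :=
  ¬ ∃ i j k, i < j ∧ j < k ∧ k < l.length ∧
      l.getD k 0 < l.getD i 0 ∧ l.getD i 0 < l.getD j 0

/-- The list of values of the left-to-right maxima of `l`, in order. -/
def lrMaxima (l : List ℕ) : List ℕ :=
  ((List.range l.length).filter
    (fun i => (l.take i).all (fun b => b < l.getD i 0))).map (fun i => l.getD i 0)

/-- `lmax`: the number of left-to-right maxima. -/
def lmax (l : List ℕ) : ℕ :=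
  (List.range l.length).countP (fun i => (l.take i).all (fun b => b < l.getD i 0))

/-- `rmax`: the number of right-to-left maxima. -/
def rmax (l : List ℕ) : ℕ :=
  (List.range l.length).countP (fun i => (l.drop (i+1)).all (fun b => b < l.getD i 0))

/-- `asc`: the number of ascents. -/
def asc (l : List ℕ) : ℕ :=
  (List.range (l.length - 1)).countP (fun i => l.getD i 0 < l.getD (i+1) 0)

/-- `des`: the number of descents. -/
def des (l : List ℕ) : ℕ :=
  (List.range (l.length - 1)).countP (fun i => l.getD (i+1) 0 < l.getD i 0)

/-- `slmax(π)`: the number of left-to-right maxima of `S(π)`. -/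
def slmax (l : List ℕ) : ℕ := lmax (S l)

/-- `sldes(π)`: the number of entries `a` that precede `a - 1` in `S(π)`. -/
def sldes (l : List ℕ) : ℕ :=
  (List.range (S l).length).countP
    (fun i => ((S l).drop (i+1)).any (fun b => b + 1 = (S l).getD i 0))

/-- The construction `C1(π1, π2) = π1 · (k+ℓ+1) · π2^{+k}`. -/
def C1 (p1 p2 : List ℕ) : List ℕ :=
  p1 ++ (p1.length + p2.length + 1) :: shift p1.length p2

/-- The `i`-th left-to-right maximum `a_i` of `S(π2)` (1-indexed). -/
def lrm (p2 : List ℕ) (i : ℕ) : ℕ := (lrMaxima (S p2)).getD (i - 1) 0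

/-- The construction `C2(π1, π2, i) = π1^{+(0,k,a_i)} · (k+ℓ+1) · π2^{+(k-1,a_i+1,k)}`. -/
def C2 (p1 p2 : List ℕ) (i : ℕ) : List ℕ :=
  shift3 0 p1.length (lrm p2 i) p1 ++
    (p1.length + p2.length + 1) :: shift3 (p1.length - 1) (lrm p2 i + 1) p1.length p2

/-- The decomposition `D(π) = (P(π_ℓ), P(π_r))`, where `π = π_ℓ · (n) · π_r`
with `n` the largest entry of `π`. -/
def D (l : List ℕ) : List ℕ × List ℕ :=
  match l with
  | [] => ([], [])
  | x :: t =>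
    let m := t.foldr max x
    (stand ((x :: t).takeWhile (· ≠ m)), stand (((x :: t).dropWhile (· ≠ m)).tail))

-- ===================== auxiliary development =====================

theorem le_foldr_max' {y x : ℕ} {l : List ℕ} (h : y ∈ x :: l) : y ≤ l.foldr max x := by
  induction l generalizing x with
  | nil => simp at h; simp [h]
  | cons a t ih =>
    simp only [List.foldr_cons]
    rcases List.mem_cons.mp h with h' | h'
    · subst h'; exact le_trans (ih List.mem_cons_self) (le_max_right _ _)
    · rcases List.mem_cons.mp h' with h'' | h''
      · subst h''; exact le_max_left _ _
      · exact le_trans (ih (List.mem_cons.mpr (Or.inr h''))) (le_max_right _ _)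

theorem foldr_max_le' {x m : ℕ} {l : List ℕ} (hub : ∀ y ∈ x :: l, y ≤ m) :
    l.foldr max x ≤ m := by
  induction l generalizing x with
  | nil => exact hub x (by simp)
  | cons a t ih =>
    simp only [List.foldr_cons]
    refine max_le (hub a (by simp)) (ih fun y hy => hub y ?_)
    rcases List.mem_cons.mp hy with h | h
    · simp [h]
    · exact List.mem_cons.mpr (Or.inr (List.mem_cons.mpr (Or.inr h)))

theorem foldr_max_eq_of {x m : ℕ} {l : List ℕ} (hm : m ∈ x :: l)
    (hub : ∀ y ∈ x :: l, y ≤ m) : l.foldr max x = m :=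
  le_antisymm (foldr_max_le' hub) (le_foldr_max' hm)

theorem takeWhile_neq_append (A B : List ℕ) (m : ℕ) (hA : ∀ a ∈ A, a ≠ m) :
    (A ++ m :: B).takeWhile (fun y => decide (y ≠ m)) = A := by
  induction A with
  | nil => simp [List.takeWhile_cons]
  | cons a A' ih =>
    have ha : a ≠ m := hA a (by simp)
    rw [List.cons_append, List.takeWhile_cons, if_pos (decide_eq_true ha),
      ih fun b hb => hA b (List.mem_cons.mpr (Or.inr hb))]

theorem dropWhile_neq_append (A B : List ℕ) (m : ℕ) (hA : ∀ a ∈ A, a ≠ m) :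
    (A ++ m :: B).dropWhile (fun y => decide (y ≠ m)) = m :: B := by
  induction A with
  | nil => simp [List.dropWhile_cons]
  | cons a A' ih =>
    have ha : a ≠ m := hA a (by simp)
    rw [List.cons_append, List.dropWhile_cons, if_pos (decide_eq_true ha),
      ih fun b hb => hA b (List.mem_cons.mpr (Or.inr hb))]

theorem S_split (A B : List ℕ) (m : ℕ) (hA : ∀ a ∈ A, a < m) (hB : ∀ b ∈ B, b < m) :
    S (A ++ m :: B) = S A ++ S B ++ [m] := by
  obtain ⟨x, t, h⟩ : ∃ x t, A ++ m :: B = x :: t := by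
    cases A with
    | nil => exact ⟨m, B, rfl⟩
    | cons a A' => exact ⟨a, A' ++ m :: B, rfl⟩
  have hm : m ∈ x :: t := h ▸ List.mem_append_right A (List.mem_cons_self (a := m) (l := B))
  have hub : ∀ y ∈ x :: t, y ≤ m := by
    rw [← h]; intro y hy
    rcases List.mem_append.mp hy with h' | h'
    · exact le_of_lt (hA y h')
    · rcases List.mem_cons.mp h' with h'' | h''
      · exact le_of_eq h''
      · exact le_of_lt (hB y h'')
  have hfold : t.foldr max x = m := foldr_max_eq_of hm hub
  rw [h, S.eq_2, hfold, ← h,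
    takeWhile_neq_append A B m (fun a ha => ne_of_lt (hA a ha)),
    dropWhile_neq_append A B m (fun a ha => ne_of_lt (hA a ha)), List.tail_cons]

theorem dropWhile_mem_cons {m : ℕ} {l : List ℕ} (h : m ∈ l) :
    l.dropWhile (fun y => decide (y ≠ m)) = m :: (l.dropWhile (fun y => decide (y ≠ m))).tail := by
  induction l with
  | nil => cases h
  | cons a t ih =>
    by_cases ha : a = m
    · subst ha
      rw [List.dropWhile_cons, if_neg (by simp)]
      rfl
    · have hm : m ∈ t := by
        rcases List.mem_cons.mp h with h' | h'
        · exact absurd h'.symm ha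
        · exact h'
      rw [List.dropWhile_cons, if_pos (decide_eq_true ha), ih hm]
      rfl

theorem S_perm : ∀ (l : List ℕ), (S l).Perm l
  | [] => by rw [S.eq_1]
  | x :: t => by
    rw [S.eq_2]
    have hmem : (t.foldr max x) ∈ x :: t := foldr_max_mem x t
    have p1 := S_perm ((x :: t).takeWhile (fun y => decide (y ≠ t.foldr max x)))
    have p2 := S_perm (((x :: t).dropWhile (fun y => decide (y ≠ t.foldr max x))).tail)
    have hsplit : x :: t =
        (x :: t).takeWhile (fun y => decide (y ≠ t.foldr max x)) ++
          (t.foldr max x) :: ((x :: t).dropWhile (fun y => decide (y ≠ t.foldr max x))).tail := by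
      conv_lhs => rw [← List.takeWhile_append_dropWhile (p := fun y => decide (y ≠ t.foldr max x)) (l := x :: t),
        dropWhile_mem_cons hmem]
    have main :
        (S ((x :: t).takeWhile (fun y => decide (y ≠ t.foldr max x))) ++
          S (((x :: t).dropWhile (fun y => decide (y ≠ t.foldr max x))).tail) ++
          [t.foldr max x]).Perm
        ((x :: t).takeWhile (fun y => decide (y ≠ t.foldr max x)) ++
          (t.foldr max x) :: ((x :: t).dropWhile (fun y => decide (y ≠ t.foldr max x))).tail) := by
      refine ((p1.append p2).append (List.Perm.refl [t.foldr max x])).trans ?_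
      rw [List.append_assoc]
      exact List.Perm.append_left _ (List.perm_append_singleton _ _)
    exact main.trans (by rw [← hsplit])
  termination_by l => l.length
  decreasing_by
  · exact length_takeWhile_lt hmem
  · exact length_tail_dropWhile_lt (by simp)

theorem foldr_max_map (f : ℕ → ℕ) (hf : Monotone f) (x : ℕ) (t : List ℕ) :
    (t.map f).foldr max (f x) = f (t.foldr max x) := by
  induction t with
  | nil => rfl
  | cons a t ih => simp only [List.map_cons, List.foldr_cons, ih, hf.map_max]

theorem tail_map' (f : ℕ → ℕ) (l : List ℕ) : (l.map f).tail = l.tail.map f := by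
  cases l <;> rfl

theorem S_map (f : ℕ → ℕ) (hf : StrictMono f) : ∀ (l : List ℕ), S (l.map f) = (S l).map f
  | [] => by simp [S.eq_1]
  | x :: t => by
    have hmax := foldr_max_map f hf.monotone x t
    rw [List.map_cons, S.eq_2, S.eq_2, hmax]
    have hpred : ((fun y => decide (y ≠ f (t.foldr max x))) ∘ f) =
        (fun y => decide (y ≠ t.foldr max x)) := by
      funext y; simp [hf.injective.eq_iff]
    rw [← List.map_cons, List.takeWhile_map, List.dropWhile_map, hpred, tail_map',
      S_map f hf ((x :: t).takeWhile (fun y => decide (y ≠ t.foldr max x))),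
      S_map f hf (((x :: t).dropWhile (fun y => decide (y ≠ t.foldr max x))).tail)]
    simp
  termination_by l => l.length
  decreasing_by
  · exact length_takeWhile_lt (foldr_max_mem x t)
  · exact length_tail_dropWhile_lt (by simp)

/-- Left-to-right maxima above a threshold `c`. -/
def lrB (c : ℕ) (l : List ℕ) : List ℕ :=
  ((List.range l.length).filter
    (fun i => decide (c < l.getD i 0) && (l.take i).all (fun b => b < l.getD i 0))).map
    (fun i => l.getD i 0)

theorem lrB_nil (c : ℕ) : lrB c [] = [] := rfl

theorem lrB_cons (c x : ℕ) (t : List ℕ) :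
    lrB c (x :: t) = if c < x then x :: lrB x t else lrB c t := by
  have hcompv : ((fun i => (x :: t).getD i 0) ∘ Nat.succ) = (fun i => t.getD i 0) := by
    funext i; simp
  unfold lrB
  rw [List.length_cons, List.range_succ_eq_map, List.filter_cons]
  simp only [List.getD_cons_zero, List.take_zero, List.all_nil, Bool.and_true,
    List.filter_map, decide_eq_true_eq]
  by_cases hcx : c < x
  · rw [if_pos hcx, if_pos hcx, List.map_cons, List.getD_cons_zero, List.map_map, hcompv]
    congr 2
    apply List.filter_congr
    intro j _
    simp only [Function.comp_apply, Nat.succ_eq_add_one, List.getD_cons_succ,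
      List.take_succ_cons, List.all_cons]
    by_cases hx : x < t.getD j 0
    · rw [decide_eq_true (lt_trans hcx hx), decide_eq_true hx]
      simp only [Bool.true_and]
    · rw [decide_eq_false hx]
      simp only [Bool.false_and, Bool.and_false]
  · rw [if_neg hcx, if_neg hcx, List.map_map, hcompv]
    congr 1
    apply List.filter_congr
    intro j _
    simp only [Function.comp_apply, Nat.succ_eq_add_one, List.getD_cons_succ,
      List.take_succ_cons, List.all_cons]
    by_cases hc : c < t.getD j 0
    · rw [decide_eq_true (lt_of_le_of_lt (le_of_not_gt hcx) hc)]
      simp only [Bool.true_and]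
    · rw [decide_eq_false hc]
      simp only [Bool.false_and]

theorem mem_lrB : ∀ (l : List ℕ) (c y : ℕ), y ∈ lrB c l → c < y ∧ y ∈ l := by
  intro l
  induction l with
  | nil => intro c y h; rw [lrB_nil] at h; cases h
  | cons x t ih =>
    intro c y h
    rw [lrB_cons] at h
    by_cases hcx : c < x
    · rw [if_pos hcx] at h
      rcases List.mem_cons.mp h with h' | h'
      · subst h'; exact ⟨hcx, by simp⟩
      · obtain ⟨hh1, hh2⟩ := ih x y h'
        exact ⟨lt_trans hcx hh1, by simp [hh2]⟩
    · rw [if_neg hcx] at h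
      obtain ⟨hh1, hh2⟩ := ih c y h
      exact ⟨hh1, by simp [hh2]⟩

theorem lrB_sorted : ∀ (l : List ℕ) (c : ℕ), List.Pairwise (· < ·) (lrB c l) := by
  intro l
  induction l with
  | nil => intro c; rw [lrB_nil]; exact List.Pairwise.nil
  | cons x t ih =>
    intro c
    rw [lrB_cons]
    by_cases hcx : c < x
    · rw [if_pos hcx, List.pairwise_cons]
      exact ⟨fun b hb => (mem_lrB t x b hb).1, ih x⟩
    · rw [if_neg hcx]; exact ih c

theorem lrB_append : ∀ (A : List ℕ) (c : ℕ) (B : List ℕ),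
    lrB c (A ++ B) = lrB c A ++ lrB (A.foldl max c) B := by
  intro A
  induction A with
  | nil => intros; rfl
  | cons a A' ih =>
    intro c B
    rw [List.cons_append, lrB_cons, lrB_cons, List.foldl_cons]
    by_cases hca : c < a
    · rw [if_pos hca, if_pos hca, max_eq_right hca.le, ih a B, List.cons_append]
    · rw [if_neg hca, if_neg hca, max_eq_left (le_of_not_gt hca), ih c B]

theorem lrB_map (g : ℕ → ℕ) (hg : StrictMono g) :
    ∀ (l : List ℕ) (c d : ℕ), (∀ x, d < g x ↔ c < x) → lrB d (l.map g) = (lrB c l).map g := by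
  intro l
  induction l with
  | nil => intros; rfl
  | cons x t ih =>
    intro c d h
    rw [List.map_cons, lrB_cons, lrB_cons]
    by_cases hcx : c < x
    · rw [if_pos ((h x).mpr hcx), if_pos hcx, List.map_cons,
        ih x (g x) (fun y => hg.lt_iff_lt)]
    · rw [if_neg (fun hh => hcx ((h x).mp hh)), if_neg hcx, ih c d h]

theorem lrB_filter : ∀ (l : List ℕ) {c d : ℕ}, c ≤ d →
    lrB d l = (lrB c l).filter (fun v => decide (d < v)) := by
  intro l
  induction l with
  | nil => intros; rfl
  | cons x t ih =>
    intro c d hcd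
    rw [lrB_cons, lrB_cons]
    by_cases hdx : d < x
    · have hcx : c < x := lt_of_le_of_lt hcd hdx
      rw [if_pos hdx, if_pos hcx, List.filter_cons, if_pos (by simpa using hdx)]
      congr 1
      symm
      rw [List.filter_eq_self]
      intro b hb
      simpa using lt_trans hdx (mem_lrB t x b hb).1
    · rw [if_neg hdx]
      by_cases hcx : c < x
      · rw [if_pos hcx, List.filter_cons, if_neg (by simpa using hdx)]
        exact ih (le_of_not_gt hdx)
      · rw [if_neg hcx]
        exact ih hcd

theorem lrB_singleton (c n : ℕ) : lrB c [n] = if c < n then [n] else [] := by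
  rw [lrB_cons]
  by_cases h : c < n <;> simp [h, lrB_nil]

theorem le_foldl_max_self : ∀ (l : List ℕ) (c : ℕ), c ≤ l.foldl max c := by
  intro l
  induction l with
  | nil => intro c; simp
  | cons a t ih =>
    intro c
    rw [List.foldl_cons]
    exact le_trans (le_max_left c a) (ih (max c a))

theorem le_foldl_max_of_mem : ∀ {l : List ℕ} {y : ℕ}, y ∈ l → ∀ c, y ≤ l.foldl max c := by
  intro l
  induction l with
  | nil => intro y h; cases h
  | cons a t ih =>
    intro y h c
    rw [List.foldl_cons]
    rcases List.mem_cons.mp h with h' | h'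
    · subst h'; exact le_trans (le_max_right c y) (le_foldl_max_self t _)
    · exact ih h' _

theorem foldl_max_le : ∀ (l : List ℕ) {c m : ℕ}, c ≤ m → (∀ y ∈ l, y ≤ m) → l.foldl max c ≤ m := by
  intro l
  induction l with
  | nil => intro c m hc _; simpa using hc
  | cons a t ih =>
    intro c m hc h
    rw [List.foldl_cons]
    exact ih (max_le hc (h a (by simp))) (fun y hy => h y (List.mem_cons.mpr (Or.inr hy)))

theorem foldl_max_eq {l : List ℕ} {c m : ℕ} (hmem : m ∈ l) (hub : ∀ y ∈ l, y ≤ m)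
    (hc : c ≤ m) : l.foldl max c = m :=
  le_antisymm (foldl_max_le l hc hub) (le_foldl_max_of_mem hmem c)

theorem lmax_eq_lrB {l : List ℕ} (h : ∀ y ∈ l, 0 < y) : lmax l = (lrB 0 l).length := by
  unfold lmax lrB
  rw [List.length_map, List.countP_eq_length_filter]
  congr 1
  apply List.filter_congr
  intro i hi
  have hil : i < l.length := List.mem_range.mp hi
  rw [List.getD_eq_getElem l 0 hil]
  have h0 : 0 < l[i] := h _ (List.getElem_mem hil)
  simp [h0]

theorem lrMaxima_eq_lrB {l : List ℕ} (h : ∀ y ∈ l, 0 < y) : lrMaxima l = lrB 0 l := by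
  unfold lrMaxima lrB
  congr 1
  apply List.filter_congr
  intro i hi
  have hil : i < l.length := List.mem_range.mp hi
  rw [List.getD_eq_getElem l 0 hil]
  have h0 : 0 < l[i] := h _ (List.getElem_mem hil)
  simp [h0]

theorem sorted_filter_getD : ∀ (M : List ℕ), M.Pairwise (· < ·) → ∀ j, j < M.length →
    (M.filter (fun v => decide (M.getD j 0 < v))).length = M.length - j - 1 := by
  intro M
  induction M with
  | nil => intro _ j hj; simp at hj
  | cons x t ih =>
    intro hs j hj
    obtain ⟨hx, hts⟩ := List.pairwise_cons.mp hs
    cases j with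
    | zero =>
      simp only [List.getD_cons_zero, List.filter_cons, if_neg (by simp : ¬(decide (x < x) = true))]
      rw [List.filter_eq_self.mpr (fun b hb => by simpa using hx b hb)]
      simp
    | succ j' =>
      have hj' : j' < t.length := by simpa using hj
      have hpiv : x < t.getD j' 0 := by
        rw [List.getD_eq_getElem t 0 hj']; exact hx _ (List.getElem_mem hj')
      simp only [List.getD_cons_succ, List.filter_cons,
        if_neg (by simp only [decide_eq_true_eq]; omega : ¬(decide (t.getD j' 0 < x) = true))]
      rw [ih hts j' hj']
      simp only [List.length_cons]
      omega
/-- For `k, ℓ > 0`, `π1 ∈ T_k`, `π2 ∈ T_ℓ` and `1 ≤ i ≤ slmax(π2)`,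
`slmax(C2(π1, π2, i)) = slmax(π1) + slmax(π2) − i + 1`. -/
theorem slmax_C2 (k ℓ : ℕ) (hk : 0 < k) (hℓ : 0 < ℓ) (π1 π2 : List ℕ)
    (h1 : π1.length = k) (h1' : Is2SS π1) (h2 : π2.length = ℓ) (h2' : Is2SS π2)
    (i : ℕ) (hi1 : 1 ≤ i) (hi2 : i ≤ slmax π2) :
    slmax (C2 π1 π2 i) = slmax π1 + slmax π2 - i + 1 := by
  have hperm1 : π1.Perm (List.range' 1 k) := by
    have := h1'.1; rw [IsPermOf, idPerm, h1] at this; exact this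
  have hperm2 : π2.Perm (List.range' 1 ℓ) := by
    have := h2'.1; rw [IsPermOf, idPerm, h2] at this; exact this
  have hP1 : ∀ y ∈ π1, 1 ≤ y ∧ y ≤ k := by
    intro y hy
    have := List.mem_range'_1.mp (hperm1.mem_iff.mp hy); omega
  have hP2 : ∀ y ∈ π2, 1 ≤ y ∧ y ≤ ℓ := by
    intro y hy
    have := List.mem_range'_1.mp (hperm2.mem_iff.mp hy); omega
  have hS1 : ∀ y ∈ S π1, 1 ≤ y ∧ y ≤ k := fun y hy => hP1 y ((S_perm π1).mem_iff.mp hy)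
  have hS2 : ∀ y ∈ S π2, 1 ≤ y ∧ y ≤ ℓ := fun y hy => hP2 y ((S_perm π2).mem_iff.mp hy)
  have hS2pos : ∀ y ∈ S π2, 0 < y := fun y hy => (hS2 y hy).1
  -- the i-th left-to-right maximum of S π2
  set a := lrm π2 i with ha_def
  set M := lrB 0 (S π2) with hM_def
  have hMlen : M.length = lmax (S π2) := (lmax_eq_lrB hS2pos).symm
  have hi2' : i ≤ lmax (S π2) := hi2
  have hiM : i - 1 < M.length := by omega
  have haM : a = M.getD (i - 1) 0 := by
    rw [ha_def, lrm, lrMaxima_eq_lrB hS2pos]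
  have haMem : a ∈ M := by
    rw [haM, List.getD_eq_getElem M 0 hiM]; exact List.getElem_mem hiM
  have haS2 : a ∈ S π2 := (mem_lrB _ _ _ haMem).2
  have ha : 1 ≤ a ∧ a ≤ ℓ := hS2 a haS2
  -- the two shift maps
  set f : ℕ → ℕ := fun u => if u < k then u + 0 else u + a with hf_def
  set g : ℕ → ℕ := fun u => if u < a + 1 then u + (k - 1) else u + k with hg_def
  have hfSM : StrictMono f := by
    intro u v huv; simp only [hf_def]; split_ifs <;> omega
  have hgSM : StrictMono g := by
    intro u v huv; simp only [hg_def]; split_ifs <;> omega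
  -- the shape of C2
  have hC2 : C2 π1 π2 i = π1.map f ++ (k + ℓ + 1) :: π2.map g := by
    rw [C2, shift3, shift3, h1, h2, ← ha_def, ← hf_def, ← hg_def]
  -- bounds, to split S over the maximum
  have hb1 : ∀ y ∈ π1.map f, y < k + ℓ + 1 := by
    intro y hy
    obtain ⟨u, hu, rfl⟩ := List.mem_map.mp hy
    have := hP1 u hu
    simp only [hf_def]; split_ifs <;> omega
  have hb2 : ∀ y ∈ π2.map g, y < k + ℓ + 1 := by
    intro y hy
    obtain ⟨u, hu, rfl⟩ := List.mem_map.mp hy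
    have := hP2 u hu
    simp only [hg_def]; split_ifs <;> omega
  have hSC2 : S (C2 π1 π2 i) = S (π1.map f) ++ S (π2.map g) ++ [k + ℓ + 1] := by
    rw [hC2]; exact S_split _ _ _ hb1 hb2
  have hSm1 : S (π1.map f) = (S π1).map f := S_map f hfSM π1
  have hSm2 : S (π2.map g) = (S π2).map g := S_map g hgSM π2
  -- the maximum of the first block is k + a
  have hkS1 : k ∈ S π1 :=
    (S_perm π1).mem_iff.mpr (hperm1.mem_iff.mpr (List.mem_range'_1.mpr ⟨hk, by omega⟩))
  have hfk : f k = k + a := by simp [hf_def]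
  have hub1 : ∀ y ∈ (S π1).map f, y ≤ k + a := by
    intro y hy
    obtain ⟨u, hu, rfl⟩ := List.mem_map.mp hy
    have := hS1 u hu
    simp only [hf_def]; split_ifs <;> omega
  have hM1 : ((S π1).map f).foldl max 0 = k + a :=
    foldl_max_eq (List.mem_map.mpr ⟨k, hkS1, hfk⟩) hub1 (by omega)
  -- the last singleton block
  have hub2 : ∀ y ∈ (S π2).map g, y ≤ k + ℓ := by
    intro y hy
    obtain ⟨u, hu, rfl⟩ := List.mem_map.mp hy
    have := hS2 u hu
    simp only [hg_def]; split_ifs <;> omega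
  have hM2 : ((S π2).map g).foldl max (k + a) ≤ k + ℓ := foldl_max_le _ (by omega) hub2
  have hsing : lrB (((S π2).map g).foldl max (k + a)) [k + ℓ + 1] = [k + ℓ + 1] := by
    rw [lrB_singleton, if_pos (by omega)]
  -- decompose lrB of the whole sorted image
  have hdecomp : lrB 0 (S (C2 π1 π2 i)) =
      lrB 0 ((S π1).map f) ++ (lrB (k + a) ((S π2).map g) ++ [k + ℓ + 1]) := by
    rw [hSC2, hSm1, hSm2, List.append_assoc, lrB_append, hM1, lrB_append, hsing]
  -- count of the first block
  have c1 : (lrB 0 ((S π1).map f)).length = lmax (S π1) := by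
    rw [lrB_map f hfSM (S π1) 0 0
        (by intro u; simp only [hf_def]; split_ifs <;> omega),
      List.length_map, ← lmax_eq_lrB (fun y hy => (hS1 y hy).1)]
  -- count of the second block
  have hMsorted : M.Pairwise (· < ·) := hM_def ▸ lrB_sorted (S π2) 0
  have c2 : (lrB (k + a) ((S π2).map g)).length = lmax (S π2) - i := by
    rw [lrB_map g hgSM (S π2) a (k + a)
        (by intro u; simp only [hg_def]; split_ifs <;> omega),
      List.length_map, lrB_filter (S π2) (Nat.zero_le a), ← hM_def, haM,
      sorted_filter_getD M hMsorted (i - 1) hiM]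
    omega
  -- positivity of the entries of S (C2 π1 π2 i)
  have posC2 : ∀ y ∈ S (C2 π1 π2 i), 0 < y := by
    intro y hy
    have hy' : y ∈ C2 π1 π2 i := (S_perm _).mem_iff.mp hy
    rw [hC2] at hy'
    rcases List.mem_append.mp hy' with h' | h'
    · obtain ⟨u, hu, rfl⟩ := List.mem_map.mp h'
      have := hP1 u hu
      simp only [hf_def]; split_ifs <;> omega
    · rcases List.mem_cons.mp h' with h'' | h''
      · omega
      · obtain ⟨u, hu, rfl⟩ := List.mem_map.mp h''
        have := hP2 u hu
        simp only [hg_def]; split_ifs <;> omega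
  -- put everything together
  show lmax (S (C2 π1 π2 i)) = lmax (S π1) + lmax (S π2) - i + 1
  rw [lmax_eq_lrB posC2, hdecomp, List.length_append, List.length_append, c1, c2]
  simp only [List.length_singleton]
  omega

end TSP
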